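/- Let α ∈ [0,1) be real, m ≥ 1 an integer, and ĉ a real with ĉ ≥ (2m)^{1/(1−α)}. Then ĉ·(2/m) − 2·(2ĉ)^α ≥ (4 − 2·2^α)·(2m)^{α/(1−α)} ≥ 2. -/

import Mathlib

set_option maxHeartbeats 1000000

open Real
open Finset


lemma myExpUB (x : ℝ) (hx : |x| ≤ 1) :
    Real.exp x ≤ 1 + x + x^2/2 + 2/9 * |x|^3 := by
  have h := Real.exp_bound hx (n := 3) (by norm_num)
  have hs : ∑ m ∈ Finset.range 3, x ^ m / m.factorial = 1 + x + x^2/2 := by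
    norm_num [Finset.sum_range_succ, Nat.factorial]
  rw [hs] at h
  have h2 := (abs_sub_le_iff.1 h).1
  norm_num [Nat.factorial] at h2
  linarith

lemma mypolyA (b L : ℝ) (hb1 : 1 ≤ b) (hb2 : b ≤ 7/4) (hL1 : L < 0.6931471808)
    (hL0 : 0.6931471803 < L) :
    L*b*(1+b^2)/2 + 2/9*L^2*(b-1)*(1+b^3) ≤ b^2 := by
  have key : (0.6931471808:ℝ)*b*(1+b^2)/2 + 2/9*0.6931471808^2*(b-1)*(1+b^3) ≤ b^2 := by
    nlinarith [sq_nonneg (b-1), sq_nonneg (b-7/4), mul_nonneg (sub_nonneg.2 hb1) (sub_nonneg.2 hb2), mul_nonneg (mul_nonneg (sub_nonneg.2 hb1) (sub_nonneg.2 hb2)) (sub_nonneg.2 hb1), mul_nonneg (mul_nonneg (sub_nonneg.2 hb1) (sub_nonneg.2 hb2)) (sub_nonneg.2 hb2)]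
  have hb0 : (0:ℝ) ≤ b := by linarith
  have e1 : (0:ℝ) ≤ b*(1+b^2) := by positivity
  have e2 : (0:ℝ) ≤ (b-1)*(1+b^3) := by
    apply mul_nonneg (by linarith); positivity
  have h1 : L^2 ≤ (0.6931471808:ℝ)^2 := by nlinarith
  nlinarith [mul_nonneg (by linarith : (0:ℝ) ≤ 0.6931471808 - L) e1,
    mul_nonneg (sub_nonneg.2 h1) e2]

lemma mypolyB (b L : ℝ) (hb : 7/4 ≤ b) (hL1 : L < 0.6931471808)
    (hL0 : 0.6931471803 < L) :
    18*b^3 ≤ 3.363*((1 + L*(b-7/4))*(L*(18*b^2 - 9*L*b - 4*L^2))) := by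
  have hb0 : (0:ℝ) < b := by linarith
  have key : 18*b^3 ≤ 3.363*((1 + 0.693147*(b-7/4))*(0.693147*(18*b^2 - 9*0.693148*b - 4*0.693148^2))) := by
    nlinarith [sq_nonneg (b-7/4), mul_nonneg (mul_nonneg (sub_nonneg.2 hb) (sub_nonneg.2 hb)) (sub_nonneg.2 hb), sq_nonneg b, mul_nonneg (sub_nonneg.2 hb) (sq_nonneg (b-7/4))]
  have hinner : (0:ℝ) ≤ 18*b^2 - 9*0.693148*b - 4*0.693148^2 := by nlinarith [sq_nonneg (b-7/4)]
  have hinner2 : (0:ℝ) ≤ 18*b^2 - 9*L*b - 4*L^2 := by nlinarith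
  have hQ : 0.693147*(18*b^2 - 9*0.693148*b - 4*0.693148^2) ≤ L*(18*b^2 - 9*L*b - 4*L^2) := by
    calc (0.693147:ℝ)*(18*b^2 - 9*0.693148*b - 4*0.693148^2)
        ≤ 0.693147*(18*b^2 - 9*L*b - 4*L^2) := by nlinarith
      _ ≤ L*(18*b^2 - 9*L*b - 4*L^2) := by
          nlinarith [mul_nonneg (by linarith : (0:ℝ) ≤ L - 0.693147) hinner2]
  have hP : 1 + 0.693147*(b-7/4) ≤ 1 + L*(b-7/4) := by nlinarith
  have hP0 : (0:ℝ) ≤ 1 + 0.693147*(b-7/4) := by nlinarith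
  have hQ0 : (0:ℝ) ≤ 0.693147*(18*b^2 - 9*0.693148*b - 4*0.693148^2) := by nlinarith
  have := mul_le_mul hP hQ hQ0 (by nlinarith : (0:ℝ) ≤ 1 + L*(b-7/4))
  nlinarith

lemma core (b : ℝ) (hb : 1 ≤ b) :
    Real.exp (-(Real.log 2 * b)) + Real.exp (-(Real.log 2 / b)) ≤ 1 := by
  set L := Real.log 2 with hLdef
  have hL1 : L < 0.6931471808 := Real.log_two_lt_d9
  have hL0 : 0.6931471803 < L := Real.log_two_gt_d9
  have hb0 : (0:ℝ) < b := by linarith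
  have expnegL : Real.exp (-L) = 1/2 := by
    rw [Real.exp_neg, hLdef, Real.exp_log (by norm_num : (0:ℝ) < 2)]
    norm_num
  rcases le_total b (7/4) with hb2 | hb2
  · -- Case A
    set w := L*(b-1) with hwdef
    set z := w/b with hzdef
    have hw0 : 0 ≤ w := by nlinarith
    have hw1 : w ≤ 1 := by nlinarith
    have hz0 : 0 ≤ z := by positivity
    have hz1 : z ≤ 1 := by
      rw [hzdef, div_le_one hb0]; nlinarith
    have e1 : Real.exp (-(L*b)) = 1/2 * Real.exp (-w) := by
      rw [← expnegL, ← Real.exp_add]; rw [hwdef]; ring_nf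
    have e2 : Real.exp (-(L/b)) = 1/2 * Real.exp z := by
      rw [← expnegL, ← Real.exp_add]
      congr 1
      rw [hzdef, hwdef]
      field_simp
      ring
    have bw := myExpUB (-w) (by rw [abs_of_nonpos (by linarith)]; linarith)
    rw [abs_of_nonpos (by linarith : -w ≤ 0)] at bw
    have bz := myExpUB z (by rw [abs_of_nonneg hz0]; exact hz1)
    rw [abs_of_nonneg hz0] at bz
    norm_num at bw bz
    -- polynomial part
    have hG := mypolyA b L hb hb2 hL1 hL0
    have hF : z - w + (z^2+w^2)/2 + 2/9*(z^3+w^3) ≤ 0 := by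
      by_contra hcon
      push_neg at hcon
      have hid : b^3 * (z - w + (z^2+w^2)/2 + 2/9*(z^3+w^3))
          = w*(b-1)*(L*b*(1+b^2)/2 + 2/9*L^2*(b-1)*(1+b^3) - b^2) := by
        rw [hzdef, hwdef]
        field_simp
        ring
      nlinarith [pow_pos hb0 3, mul_nonneg (mul_nonneg hw0 (by linarith : (0:ℝ) ≤ b - 1)) (sub_nonneg.2 hG)]
    rw [e1, e2]
    nlinarith [bw, bz, hF]
  · -- Case B
    set w := L/b with hwdef
    have hw0 : 0 < w := by positivity
    have hwb : w * b = L := by rw [hwdef]; field_simp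
    have hw1 : w ≤ 1 := by
      rw [hwdef, div_le_one hb0]; linarith
    have bw := myExpUB (-w) (by rw [abs_of_nonpos (by linarith)]; linarith)
    rw [abs_of_nonpos (by linarith : -w ≤ 0)] at bw
    norm_num at bw
    -- exp(L*b) lower bound
    have h274 : (3.363:ℝ) ≤ (2:ℝ) ^ ((7:ℝ)/4) := by
      have hp : ((2:ℝ) ^ ((7:ℝ)/4)) ^ (4:ℕ) = 128 := by
        rw [← Real.rpow_natCast ((2:ℝ) ^ ((7:ℝ)/4)) 4, ← Real.rpow_mul (by norm_num : (0:ℝ) ≤ 2)]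
        norm_num
      have h4 : ((3.363:ℝ))^(4:ℕ) ≤ ((2:ℝ) ^ ((7:ℝ)/4)) ^ (4:ℕ) := by
        rw [hp]; norm_num
      exact le_of_pow_le_pow_left₀ (by norm_num) (by positivity) h4
    have hrw : (2:ℝ) ^ ((7:ℝ)/4) = Real.exp (L * (7/4)) := by
      rw [Real.rpow_def_of_pos (by norm_num : (0:ℝ) < 2)]
    have hE : 3.363*(1 + L*(b-7/4)) ≤ Real.exp (L*b) := by
      have split : L*b = L*(7/4) + L*(b-7/4) := by ring
      rw [split, Real.exp_add]
      have h1 : 1 + L*(b-7/4) ≤ Real.exp (L*(b-7/4)) := by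
        have := Real.add_one_le_exp (L*(b-7/4)); linarith
      have h1' : (0:ℝ) ≤ 1 + L*(b-7/4) := by nlinarith
      calc (3.363:ℝ)*(1 + L*(b-7/4)) ≤ Real.exp (L*(7/4)) * (1 + L*(b-7/4)) := by
            apply mul_le_mul_of_nonneg_right _ h1'
            rw [← hrw]; exact h274
        _ ≤ Real.exp (L*(7/4)) * Real.exp (L*(b-7/4)) := by
            apply mul_le_mul_of_nonneg_left h1 (Real.exp_pos _).le
    have hpoly := mypolyB b L hb2 hL1 hL0
    have hx0 : (0:ℝ) ≤ 18*b^2 - 9*L*b - 4*L^2 := by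
      nlinarith [mul_nonneg (by linarith : (0:ℝ) ≤ b - 7/4) (by linarith : (0:ℝ) ≤ b), sq_nonneg b]
    have hR0 : (0:ℝ) ≤ L*(18*b^2 - 9*L*b - 4*L^2) := mul_nonneg (by linarith) hx0
    have hER : 18*b^3 ≤ Real.exp (L*b) * (L*(18*b^2 - 9*L*b - 4*L^2)) := by
      have h1' : (0:ℝ) ≤ 1 + L*(b-7/4) := by nlinarith
      have step := mul_le_mul_of_nonneg_right hE hR0
      have eq1 : 3.363*((1 + L*(b-7/4))*(L*(18*b^2 - 9*L*b - 4*L^2)))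
          = (3.363*(1 + L*(b-7/4))) * (L*(18*b^2 - 9*L*b - 4*L^2)) := by ring
      linarith [hpoly]
    -- conclude exp(-(L*b)) ≤ w - w^2/2 - 2/9*w^3
    have hW : (w - w^2/2 - 2/9*w^3) * (18*b^3) = L*(18*b^2 - 9*L*b - 4*L^2) := by
      rw [hwdef]; field_simp; ring
    have hmain : Real.exp (-(L*b)) ≤ w - w^2/2 - 2/9*w^3 := by
      have hE0 := Real.exp_pos (L*b)
      have hb3 : (0:ℝ) < 18*b^3 := by positivity
      have h1 : 1 * (18*b^3) ≤ ((w - w^2/2 - 2/9*w^3) * Real.exp (L*b)) * (18*b^3) := by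
        calc 1 * (18*b^3) = 18*b^3 := by ring
          _ ≤ Real.exp (L*b) * (L*(18*b^2 - 9*L*b - 4*L^2)) := hER
          _ = ((w - w^2/2 - 2/9*w^3) * Real.exp (L*b)) * (18*b^3) := by rw [← hW]; ring
      have h2 : (1:ℝ) ≤ (w - w^2/2 - 2/9*w^3) * Real.exp (L*b) := le_of_mul_le_mul_right h1 hb3
      rw [Real.exp_neg, ← one_div, div_le_iff₀ hE0]
      linarith
    have : Real.exp (-(L/b)) ≤ 1 - w + w^2/2 + 2/9*w^3 := bw
    linarith [hmain, this]

theorem merge_cost_bound (α : ℝ) (hα0 : 0 ≤ α) (hα1 : α < 1)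
    (m : ℕ) (hm : 1 ≤ m) (c : ℝ)
    (hc : ((2 * m : ℝ)) ^ (1 / (1 - α)) ≤ c) :
    c * (2 / m) - 2 * (2 * c) ^ α ≥ (4 - 2 * 2 ^ α) * ((2 * m : ℝ)) ^ (α / (1 - α)) ∧
    (4 - 2 * 2 ^ α) * ((2 * m : ℝ)) ^ (α / (1 - α)) ≥ 2 := by
  have h1α : (0:ℝ) < 1 - α := by linarith
  have hm1 : (1:ℝ) ≤ (m:ℝ) := by exact_mod_cast hm
  have hM0 : (0:ℝ) < 2*(m:ℝ) := by linarith
  have hM2 : (2:ℝ) ≤ 2*(m:ℝ) := by linarith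
  set L := Real.log 2 with hLdef
  have hβ0 : 0 ≤ α/(1-α) := div_nonneg hα0 h1α.le
  have hexpnegL : Real.exp (-L) = 1/2 := by
    rw [Real.exp_neg, hLdef, Real.exp_log (by norm_num : (0:ℝ) < 2)]; norm_num
  -- key inequality: (2 - 2^α) * 2^(α/(1-α)) ≥ 1
  have hb1 : 1 ≤ 1/(1-α) := by rw [le_div_iff₀ h1α]; linarith
  have hcore := core (1/(1-α)) hb1
  have hLb : L/(1/(1-α)) = L*(1-α) := by field_simp
  rw [hLb] at hcore
  have e2a : (2:ℝ)^α = Real.exp (L*α) := Real.rpow_def_of_pos (by norm_num) α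
  have e2b : (2:ℝ)^(α/(1-α)) = Real.exp (L*(α/(1-α))) := Real.rpow_def_of_pos (by norm_num) _
  have hc1 : Real.exp (-(L*(1-α))) = Real.exp (L*α) * (1/2) := by
    rw [← hexpnegL, ← Real.exp_add]; congr 1; ring
  have hprod : Real.exp (-(L*(1/(1-α)))) * Real.exp (L*(α/(1-α))) = 1/2 := by
    rw [← Real.exp_add, ← hexpnegL]; congr 1; field_simp; ring
  have key : 1 ≤ (2 - (2:ℝ)^α) * (2:ℝ)^(α/(1-α)) := by
    rw [e2a, e2b]
    have h5 : 2 * Real.exp (-(L*(1/(1-α)))) ≤ 2 - Real.exp (L*α) := by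
      rw [hc1] at hcore; linarith
    have h6 := mul_le_mul_of_nonneg_right h5 (Real.exp_pos (L*(α/(1-α)))).le
    calc (1:ℝ) = 2 * (Real.exp (-(L*(1/(1-α)))) * Real.exp (L*(α/(1-α)))) := by
          rw [hprod]; norm_num
      _ = 2 * Real.exp (-(L*(1/(1-α)))) * Real.exp (L*(α/(1-α))) := by ring
      _ ≤ (2 - Real.exp (L*α)) * Real.exp (L*(α/(1-α))) := h6
  have h2βpos : (0:ℝ) < (2:ℝ)^(α/(1-α)) := Real.rpow_pos_of_pos (by norm_num) _
  have h2αlt : 2 - (2:ℝ)^α > 0 := by nlinarith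
  have hMβ : (2:ℝ)^(α/(1-α)) ≤ (2*(m:ℝ))^(α/(1-α)) := Real.rpow_le_rpow (by norm_num) hM2 hβ0
  have part2 : (4 - 2 * 2 ^ α) * ((2 * (m:ℝ))) ^ (α / (1 - α)) ≥ 2 := by
    have : (2 - (2:ℝ)^α) * (2*(m:ℝ))^(α/(1-α)) ≥ (2 - (2:ℝ)^α) * (2:ℝ)^(α/(1-α)) :=
      mul_le_mul_of_nonneg_left hMβ h2αlt.le
    nlinarith
  -- part 1
  set t := ((2*(m:ℝ)))^(1/(1-α)) with htdef
  have ht0 : 0 < t := Real.rpow_pos_of_pos hM0 _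
  have hc0 : 0 < c := lt_of_lt_of_le ht0 hc
  have hexp : c^(α-1) ≤ t^(α-1) := Real.rpow_le_rpow_of_nonpos ht0 hc (by linarith)
  have ht1 : t^(α-1) = 1/(2*(m:ℝ)) := by
    rw [htdef, ← Real.rpow_mul hM0.le]
    have : (1/(1-α))*(α-1) = -1 := by field_simp; ring
    rw [this, Real.rpow_neg_one, one_div]
  have hca : c^α = c * c^(α-1) := by
    nth_rewrite 1 [show α = 1 + (α-1) by ring]
    rw [Real.rpow_add hc0, Real.rpow_one]
  have h2c : (2*c)^α = 2^α * c^α := Real.mul_rpow (by norm_num) hc0.le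
  have h2αpos : (0:ℝ) < (2:ℝ)^α := Real.rpow_pos_of_pos (by norm_num) _
  have hbound : 2*(2*c)^α ≤ 2*2^α*c*(1/(2*(m:ℝ))) := by
    rw [h2c, hca]
    have := mul_le_mul_of_nonneg_left (ht1 ▸ hexp) (by positivity : (0:ℝ) ≤ 2*2^α*c)
    calc 2*(2^α*(c*c^(α-1))) = 2*2^α*c*c^(α-1) := by ring
      _ ≤ 2*2^α*c*(1/(2*(m:ℝ))) := this
  have htM : t/(2*(m:ℝ)) = ((2*(m:ℝ)))^(α/(1-α)) := by
    rw [htdef, div_eq_mul_inv, ← Real.rpow_neg_one (2*(m:ℝ)), ← Real.rpow_add hM0]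
    congr 1
    field_simp
    ring
  have hm0 : (m:ℝ) ≠ 0 := by linarith
  have hrw1 : c * (2/(m:ℝ)) = 4*c/(2*(m:ℝ)) := by field_simp; ring
  have part1 : c * (2 / (m:ℝ)) - 2 * (2 * c) ^ α ≥ (4 - 2 * 2 ^ α) * ((2 * (m:ℝ))) ^ (α / (1 - α)) := by
    have hstep : c * (2/(m:ℝ)) - 2*(2*c)^α ≥ (4 - 2*2^α) * (c/(2*(m:ℝ))) := by
      rw [hrw1]
      have : 2*2^α*c*(1/(2*(m:ℝ))) = 2*2^α*(c/(2*(m:ℝ))) := by ring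
      rw [this] at hbound
      have hcM : 4*c/(2*(m:ℝ)) = 4*(c/(2*(m:ℝ))) := by ring
      nlinarith [hbound]
    have hcoef : (0:ℝ) ≤ 4 - 2*2^α := by nlinarith
    have hct : t/(2*(m:ℝ)) ≤ c/(2*(m:ℝ)) := by gcongr
    have := mul_le_mul_of_nonneg_left hct hcoef
    rw [htM] at this
    linarith
  exact ⟨part1, part2⟩
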